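/- For nonnegative integers i and n with 2i ≥ n, the coefficient of z^{2i} t^n in the power series Π_{k≥1} (1 − z^{2k−2} t^k)^{-1} (1 − z^{2k} t^k)^{-1} (1 − z^{2k+2} t^k)^{-1} does not depend on n; equivalently, the even Betti numbers b_{2i}((ℙ²)^[n]) stabilize: b_{2i}((ℙ²)^[n]) = b_{2i}((ℙ²)^[m]) whenever 2i ≤ min(n, m). -/

import Mathlib

/-!
STATEMENT 8: The even coefficients of Göttsche's product
`Π_{k≥1} (1 − z^{2k−2}t^k)^{-1}(1 − z^{2k}t^k)^{-1}(1 − z^{2k+2}t^k)^{-1}` stabilize: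
the coefficient of `z^{2i} t^n` does not depend on `n` in the stable range; equivalently,
the even Betti numbers of the Hilbert schemes of points on `ℙ²` satisfy
`b_{2i}((ℙ²)^[n]) = b_{2i}((ℙ²)^[m])` whenever `2i ≤ min(n, m)`.

This is the purely combinatorial statement about the coefficients of the product.  As in
the previous statement, the coefficient of `tⁿ` is computed from the finite product over
`1 ≤ k ≤ n`, since factors with `k > n` do not contribute.
-/

open PowerSeries Polynomial

/-- The geometric series `(1 − z^a t^k)^{-1} = Σ_{l≥0} z^{al} t^{kl}` in `ℤ[z][[t]]`. -/
noncomputable def goettscheFactor (a k : ℕ) : PowerSeries (Polynomial ℤ) :=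
  PowerSeries.mk fun m => if k ∣ m then (Polynomial.X : Polynomial ℤ) ^ (a * (m / k)) else 0

/-- The Göttsche product, truncated at `k ≤ N` (factors with `k > N` do not affect
coefficients of `t^n` for `n ≤ N`). -/
noncomputable def goettscheProd (N : ℕ) : PowerSeries (Polynomial ℤ) :=
  ∏ k ∈ Finset.Icc 1 N,
    goettscheFactor (2 * k - 2) k * goettscheFactor (2 * k) k * goettscheFactor (2 * k + 2) k

/- ### Auxiliary material -/

/-- The triple of factors for a given `k`. -/
noncomputable def trip (k : ℕ) : PowerSeries (Polynomial ℤ) :=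
  goettscheFactor (2 * k - 2) k * goettscheFactor (2 * k) k * goettscheFactor (2 * k + 2) k

lemma goettscheProd_eq (N : ℕ) : goettscheProd N = ∏ k ∈ Finset.Ioc 0 N, trip k := by
  rw [goettscheProd, ← Finset.Icc_add_one_left_eq_Ioc]; rfl

lemma coeff_gf (a k m : ℕ) :
    PowerSeries.coeff (R := Polynomial ℤ) m (goettscheFactor a k)
      = if k ∣ m then (Polynomial.X : Polynomial ℤ) ^ (a * (m / k)) else 0 :=
  PowerSeries.coeff_mk _ _

lemma gf_c0 (a k : ℕ) : PowerSeries.coeff (R := Polynomial ℤ) 0 (goettscheFactor a k) = 1 := by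
  simp [coeff_gf]

lemma gf01 (m : ℕ) : PowerSeries.coeff (R := Polynomial ℤ) m (goettscheFactor 0 1) = 1 := by
  simp [coeff_gf]

lemma gf_hi (a k m : ℕ) (h : m < k) (hm : m ≠ 0) :
    PowerSeries.coeff (R := Polynomial ℤ) m (goettscheFactor a k) = 0 := by
  rw [coeff_gf, if_neg]
  exact fun hd => hm (Nat.eq_zero_of_dvd_of_lt hd h)

/-- `P` agrees with `1` in `t`-degrees `≤ q`. -/
def HO (q : ℕ) (P : PowerSeries (Polynomial ℤ)) : Prop :=
  PowerSeries.coeff (R := Polynomial ℤ) 0 P = 1 ∧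
    ∀ j, 0 < j → j ≤ q → PowerSeries.coeff (R := Polynomial ℤ) j P = 0

lemma HO_one (q : ℕ) : HO q 1 :=
  ⟨by simp, fun j hj _ => by simp [PowerSeries.coeff_one, hj.ne']⟩

lemma HO_mul {q : ℕ} {P Q : PowerSeries (Polynomial ℤ)} (hP : HO q P) (hQ : HO q Q) :
    HO q (P * Q) := by
  constructor
  · rw [PowerSeries.coeff_zero_eq_constantCoeff, map_mul,
      ← PowerSeries.coeff_zero_eq_constantCoeff_apply,
      ← PowerSeries.coeff_zero_eq_constantCoeff_apply, hP.1, hQ.1, one_mul]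
  · intro j hj hjq
    rw [PowerSeries.coeff_mul]
    apply Finset.sum_eq_zero
    rintro ⟨p, r⟩ hpr
    rw [Finset.HasAntidiagonal.mem_antidiagonal] at hpr
    rcases Nat.eq_zero_or_pos p with rfl | hp
    · rw [hQ.2 r (by omega) (by omega), mul_zero]
    · rw [hP.2 p hp (by omega), zero_mul]

lemma HO_gf {q : ℕ} (a k : ℕ) (h : q < k) : HO q (goettscheFactor a k) :=
  ⟨gf_c0 a k, fun j hj hjq => gf_hi a k j (lt_of_le_of_lt hjq h) hj.ne'⟩

lemma HO_trip {q k : ℕ} (h : q < k) : HO q (trip k) :=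
  HO_mul (HO_mul (HO_gf _ _ h) (HO_gf _ _ h)) (HO_gf _ _ h)

lemma HO_prod {q A B : ℕ} (h : q ≤ A) : HO q (∏ k ∈ Finset.Ioc A B, trip k) := by
  refine Finset.prod_induction _ (HO q) (fun _ _ => HO_mul) (HO_one q) ?_
  intro k hk
  exact HO_trip (lt_of_le_of_lt h (Finset.mem_Ioc.mp hk).1)

lemma coeff_mul_ho {q : ℕ} {P T : PowerSeries (Polynomial ℤ)} (hT : HO q T) :
    PowerSeries.coeff (R := Polynomial ℤ) q (P * T) = PowerSeries.coeff (R := Polynomial ℤ) q P := by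
  rw [PowerSeries.coeff_mul]
  rw [Finset.sum_eq_single (q, 0)]
  · rw [hT.1, mul_one]
  · rintro ⟨p, r⟩ hpr hne
    rw [Finset.HasAntidiagonal.mem_antidiagonal] at hpr
    have hr : 0 < r := by
      rcases Nat.eq_zero_or_pos r with rfl | h'
      · exact absurd (by omega : p = q) (by simpa using hne)
      · exact h'
    rw [hT.2 r hr (by omega), mul_zero]
  · intro h
    exact absurd (Finset.HasAntidiagonal.mem_antidiagonal.mpr (by omega)) h

/-- The `z`-degree of the coefficient of `tʲ` is at least `j`. -/
def LD (P : PowerSeries (Polynomial ℤ)) : Prop :=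
  ∀ j d, d < j → (PowerSeries.coeff (R := Polynomial ℤ) j P).coeff d = 0

lemma LD_one : LD 1 := by
  intro j d h
  rw [PowerSeries.coeff_one, if_neg (by omega)]
  simp

lemma LD_mul {P Q : PowerSeries (Polynomial ℤ)} (hP : LD P) (hQ : LD Q) : LD (P * Q) := by
  intro j d h
  rw [PowerSeries.coeff_mul, Polynomial.finset_sum_coeff]
  apply Finset.sum_eq_zero
  rintro ⟨p, r⟩ hpr
  rw [Finset.HasAntidiagonal.mem_antidiagonal] at hpr
  rw [Polynomial.coeff_mul]
  apply Finset.sum_eq_zero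
  rintro ⟨d1, d2⟩ hd
  rw [Finset.HasAntidiagonal.mem_antidiagonal] at hd
  rcases lt_or_ge d1 p with h1 | h1
  · rw [hP p d1 h1, zero_mul]
  · rw [hQ r d2 (by omega), mul_zero]

lemma LD_gf {a k : ℕ} (h : k ≤ a) : LD (goettscheFactor a k) := by
  intro j d hd
  rw [coeff_gf]
  split_ifs with hk
  · rw [Polynomial.coeff_X_pow, if_neg]
    have hj : k * (j / k) = j := Nat.mul_div_cancel' hk
    have : j ≤ a * (j / k) := by
      calc j = k * (j / k) := hj.symm
        _ ≤ a * (j / k) := Nat.mul_le_mul_right _ h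
    omega
  · simp

/-- The Göttsche product with the factor `(1-t)^{-1}` (i.e. `a = 0`, `k = 1`) removed. -/
noncomputable def RR (N : ℕ) : PowerSeries (Polynomial ℤ) :=
  goettscheFactor 2 1 * goettscheFactor 4 1 * ∏ k ∈ Finset.Ioc 1 N, trip k

lemma LD_RR (N : ℕ) : LD (RR N) := by
  refine LD_mul (LD_mul (LD_gf (by norm_num)) (LD_gf (by norm_num))) ?_
  refine Finset.prod_induction _ LD (fun _ _ => LD_mul) LD_one ?_
  intro k hk
  have hk2 : 1 < k := (Finset.mem_Ioc.mp hk).1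
  exact LD_mul (LD_mul (LD_gf (by omega)) (LD_gf (by omega))) (LD_gf (by omega))

lemma prod_factor (n : ℕ) (hn : 1 ≤ n) :
    goettscheProd n = goettscheFactor 0 1 * RR n := by
  rw [goettscheProd_eq, ← Finset.prod_Ioc_consecutive _ (Nat.zero_le 1) hn]
  have h1 : ∏ k ∈ Finset.Ioc 0 1, trip k = trip 1 := by
    rw [show Finset.Ioc 0 1 = {1} from rfl, Finset.prod_singleton]
  rw [h1, trip, RR]
  norm_num
  ring

lemma RR_c0 (N : ℕ) : PowerSeries.coeff (R := Polynomial ℤ) 0 (RR N) = 1 := by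
  have := (HO_prod (B := N) (le_refl 1)).1
  rw [RR, (HO_mul (HO_mul (HO_gf (q := 0) 2 1 one_pos) (HO_gf 4 1 one_pos))
    (HO_prod (A := 1) (B := N) (Nat.zero_le 1))).1]

lemma coeff_RR (j N M : ℕ) (hjN : j ≤ N) (hNM : N ≤ M) :
    PowerSeries.coeff (R := Polynomial ℤ) j (RR M) = PowerSeries.coeff (R := Polynomial ℤ) j (RR N) := by
  rcases Nat.eq_zero_or_pos j with rfl | hj
  · rw [RR_c0, RR_c0]
  · have h1N : 1 ≤ N := le_trans hj hjN
    rw [RR, RR, ← Finset.prod_Ioc_consecutive _ h1N hNM, ← mul_assoc]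
    exact coeff_mul_ho (HO_prod hjN)

lemma main_lemma (i n : ℕ) (hn : 2 * i ≤ n) :
    ((PowerSeries.coeff (R := Polynomial ℤ) n) (goettscheProd n)).coeff (2 * i)
      = ∑ j ∈ Finset.range (2 * i + 1),
          ((PowerSeries.coeff (R := Polynomial ℤ) j) (RR (2 * i))).coeff (2 * i) := by
  rcases Nat.eq_zero_or_pos n with rfl | hn1
  · have hi : i = 0 := by omega
    subst hi
    rw [Finset.sum_range_one]
    norm_num [RR_c0]
    have : goettscheProd 0 = 1 := by
      rw [goettscheProd]; simp
    rw [this]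
    simp
  · rw [prod_factor n hn1, PowerSeries.coeff_mul]
    have hsum : ∑ x ∈ Finset.HasAntidiagonal.antidiagonal n,
        PowerSeries.coeff (R := Polynomial ℤ) x.1 (goettscheFactor 0 1) *
          PowerSeries.coeff (R := Polynomial ℤ) x.2 (RR n)
        = ∑ j ∈ Finset.range (n + 1), PowerSeries.coeff (R := Polynomial ℤ) j (RR n) := by
      rw [Finset.Nat.sum_antidiagonal_eq_sum_range_succ_mk]
      simp only [gf01, one_mul]
      exact Finset.sum_range_reflect (fun j => PowerSeries.coeff (R := Polynomial ℤ) j (RR n)) (n + 1)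
    rw [hsum, Polynomial.finset_sum_coeff]
    rw [← Finset.sum_subset (Finset.range_subset_range.mpr (by omega) :
        Finset.range (2 * i + 1) ⊆ Finset.range (n + 1))
      (fun j _ hj => LD_RR n j (2 * i) (by simp at hj; omega))]
    exact Finset.sum_congr rfl fun j hj => by
      rw [coeff_RR j (2 * i) n (by simp at hj; omega) hn]

/-- Stabilization: the coefficient of `z^{2i} t^n` in Göttsche's product
(i.e. `b_{2i}((ℙ²)^[n])`) is the same for all `n ≥ 2i`. -/
theorem stmt8 (i n m : ℕ) (hn : 2 * i ≤ n) (hm : 2 * i ≤ m) :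
    ((PowerSeries.coeff (R := Polynomial ℤ) n) (goettscheProd n)).coeff (2 * i)
      = ((PowerSeries.coeff (R := Polynomial ℤ) m) (goettscheProd m)).coeff (2 * i) := by
  rw [main_lemma i n hn, main_lemma i m hm]
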